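/- arXiv:2301.07404 — 6 statements merged into one kernel-verified Lean document; each statement's English description precedes it below -/
import Mathlib

section
/- The Rado complex is homogeneous: if R is an ∞-ample simplicial complex with countably infinite vertex set, then for every two finite subsets U, U' ⊆ V(R) and every isomorphism f : R_U → R_{U'} of the induced subcomplexes, there exists an automorphism F : R → R with F restricted to R_U equal to f. -/
/-- An abstract simplicial complex on vertex type `V`: a collection of nonempty
finite subsets (simplexes) closed under passing to nonempty subsets.  The vertex
set is the set of `v` with `{v}` a simplex. -/
structure SComplex (V : Type*) where
  faces : Set (Finset V)
  nonempty_of_mem : ∀ ⦃σ : Finset V⦄, σ ∈ faces → σ.Nonempty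
  down_closed : ∀ ⦃σ : Finset V⦄, σ ∈ faces → ∀ ⦃τ : Finset V⦄, τ ⊆ σ → τ.Nonempty → τ ∈ faces

namespace SComplex

variable {V W : Type*}

/-- The vertex set of a simplicial complex. -/
def verts (X : SComplex V) : Set V := {v | {v} ∈ X.faces}

/-- The set of faces of the induced subcomplex `X_U`. -/
def induced (X : SComplex V) (U : Set V) : Set (Finset V) :=
  {σ | σ ∈ X.faces ∧ (σ : Set V) ⊆ U}

/-- The induced subcomplex `X_U`, as a simplicial complex. -/
def inducedSub (X : SComplex V) (U : Set V) : SComplex V where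
  faces := X.induced U
  nonempty_of_mem := fun _ h => X.nonempty_of_mem h.1
  down_closed := fun _ h _ hτ hne =>
    ⟨X.down_closed h.1 hτ hne, Set.Subset.trans (Finset.coe_subset.mpr hτ) h.2⟩

/-- The link of a vertex `v`: simplexes `σ` with `v ∉ σ` and `σ ∪ {v} ∈ X`. -/
def link [DecidableEq V] (X : SComplex V) (v : V) : Set (Finset V) :=
  {σ | σ ∈ X.faces ∧ v ∉ σ ∧ insert v σ ∈ X.faces}

/-- The link of a simplex `σ`: simplexes `τ` with `τ ∩ σ = ∅` and `τ ∪ σ ∈ X`. -/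
def linkSimplex [DecidableEq V] (X : SComplex V) (σ : Finset V) : SComplex V where
  faces := {τ | τ ∈ X.faces ∧ Disjoint τ σ ∧ τ ∪ σ ∈ X.faces}
  nonempty_of_mem := fun _ h => X.nonempty_of_mem h.1
  down_closed := by
    intro τ hτ ρ hρ hne
    refine ⟨X.down_closed hτ.1 hρ hne, Finset.disjoint_of_subset_left hρ hτ.2.1, ?_⟩
    exact X.down_closed hτ.2.2 (Finset.union_subset_union_left hρ)
      (hne.mono Finset.subset_union_left)

/-- A downward closed family of finite sets (a subcomplex, when contained in a complex). -/
def DownClosed (A : Set (Finset V)) : Prop :=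
  ∀ ⦃σ : Finset V⦄, σ ∈ A → ∀ ⦃τ : Finset V⦄, τ ⊆ σ → τ.Nonempty → τ ∈ A

/-- `X` is `r`-ample: `X` is nonempty and for every `U ⊆ V(X)` with `|U| ≤ r` and every
subcomplex `A ⊆ X_U` there is a vertex `v ∈ V(X) \ U` with `Lk_X(v) ∩ X_U = A`. -/
def Ample [DecidableEq V] (X : SComplex V) (r : ℕ) : Prop :=
  X.faces.Nonempty ∧
  ∀ U : Finset V, (U : Set V) ⊆ X.verts → U.card ≤ r →
    ∀ A : Set (Finset V), A ⊆ X.induced (U : Set V) → DownClosed A →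
      ∃ v ∈ X.verts, v ∉ U ∧ X.link v ∩ X.induced (U : Set V) = A

/-- An embedding of `A` into `X`: an isomorphism of `A` onto an induced subcomplex of `X`,
recorded as a vertex map injective on `V(A)` such that a set of vertexes of `A` is a
simplex of `A` iff its image is a simplex of `X`. -/
def IsEmbedding [DecidableEq V] (f : W → V) (A : SComplex W) (X : SComplex V) : Prop :=
  Set.InjOn f A.verts ∧
  ∀ σ : Finset W, (σ : Set W) ⊆ A.verts → (σ ∈ A.faces ↔ σ.image f ∈ X.faces)

/-- An isomorphism of `A` onto `X`: a bijection of vertex sets carrying simplexes to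
simplexes in both directions. -/
def IsIso [DecidableEq V] (f : W → V) (A : SComplex W) (X : SComplex V) : Prop :=
  Set.BijOn f A.verts X.verts ∧
  ∀ σ : Finset W, (σ : Set W) ⊆ A.verts → (σ ∈ A.faces ↔ σ.image f ∈ X.faces)

/-- The complex obtained from `X` by removing a set `𝓕` of simplexes: all faces of `X`
containing no member of `𝓕` as a subset. -/
def remove (X : SComplex V) (𝓕 : Set (Finset V)) : SComplex V where
  faces := {σ | σ ∈ X.faces ∧ ∀ τ ∈ 𝓕, ¬ τ ⊆ σ}
  nonempty_of_mem := fun _ h => X.nonempty_of_mem h.1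
  down_closed := fun _ hσ _ hρ hne =>
    ⟨X.down_closed hσ.1 hρ hne, fun τ hτ hsub => hσ.2 τ hτ (hsub.trans hρ)⟩

/-- `M'(r)`: the number of simplicial complexes (including the empty complex) with vertex
set contained in a fixed `r`-element set. -/
noncomputable def Mprime (r : ℕ) : ℕ :=
  Nat.card {A : Set (Finset (Fin r)) // (∀ σ ∈ A, σ.Nonempty) ∧ DownClosed A}

/-- The 1-skeleton of a complex, as a simple graph on the ambient vertex type. -/
def skeletonGraph [DecidableEq V] (Y : SComplex V) : SimpleGraph V where
  Adj u v := u ≠ v ∧ ({u, v} : Finset V) ∈ Y.faces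
  symm := ⟨fun u v h => ⟨h.1.symm, by rw [Finset.pair_comm]; exact h.2⟩⟩
  loopless := ⟨fun v h => h.1 rfl⟩

/-- The vertexes spanned by a family of simplexes. -/
def vertsOf (L : Set (Finset V)) : Set V := ⋃ σ ∈ L, (σ : Set V)

/-- `X` is `r`-conic: `X` is nonempty and every subcomplex `L ⊆ X` with at most `r`
vertexes is contained in the closed star of some vertex of `X`. -/
def Conic [DecidableEq V] (X : SComplex V) (r : ℕ) : Prop :=
  X.faces.Nonempty ∧
  ∀ L : Set (Finset V), L ⊆ X.faces → DownClosed L →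
    (vertsOf L).Finite → (vertsOf L).ncard ≤ r →
      ∃ v ∈ X.verts, ∀ σ ∈ L, insert v σ ∈ X.faces

/-- The intersection `⋂ᵢ St_K(vᵢ)` of the closed stars of the vertexes `v i`,
as a simplicial complex. -/
def starsInter [DecidableEq V] (K : SComplex V) {t : ℕ} (v : Fin t → V) : SComplex V where
  faces := {σ | σ ∈ K.faces ∧ ∀ i, insert (v i) σ ∈ K.faces}
  nonempty_of_mem := fun _ h => K.nonempty_of_mem h.1
  down_closed := fun _ hσ _ hρ hne =>
    ⟨K.down_closed hσ.1 hρ hne, fun i =>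
      K.down_closed (hσ.2 i) (Finset.insert_subset_insert _ hρ)
        ⟨v i, Finset.mem_insert_self _ _⟩⟩

end SComplex

/-- The set `Q_{n,p} = {gᵃ : a ≡ β² mod p for some integer β}` in a finite field. -/
def paleyQ {F : Type*} [Field F] (p : ℕ) (g : Fˣ) : Set F :=
  {x | ∃ α : ℤ, (∃ β : ℤ, (p : ℤ) ∣ α - β ^ 2) ∧ x = ((g ^ α : Fˣ) : F)}

/-- The product `∏_{i<j} (e i - e j)` over all pairs from an enumeration `e`. -/
def pairProd {F : Type*} [Field F] {k : ℕ} (e : Fin k → F) : F :=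
  ∏ q ∈ Finset.univ.filter (fun q : Fin k × Fin k => q.1 < q.2), (e q.1 - e q.2)

/-- The Iterated Paley simplicial complex `X_{n,p}`: vertex set `F = 𝔽_n`, and a nonempty
finite set is a simplex iff for every subset with at least two elements, the product of
the pairwise differences (in any enumeration) lies in `Q_{n,p}`. -/
def paleyComplex (F : Type*) [Field F] [DecidableEq F] (p : ℕ) (g : Fˣ) : SComplex F where
  faces := {σ | σ.Nonempty ∧ ∀ τ ⊆ σ, 2 ≤ τ.card →
    ∀ e : Fin τ.card → F, Function.Injective e → Finset.image e Finset.univ = τ →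
      pairProd e ∈ paleyQ p g}
  nonempty_of_mem := fun _ h => h.1
  down_closed := fun _ hσ _ hτ hne => ⟨hne, fun ρ hρ => hσ.2 ρ (hρ.trans hτ)⟩

namespace SComplex

variable {V : Type*} [DecidableEq V]

/-- A finite partial isomorphism of `R` with itself. -/
structure PartIso (R : SComplex V) where
  U : Finset V
  U' : Finset V
  f : V → V
  g : V → V
  hU : (U : Set V) ⊆ R.verts
  hU' : (U' : Set V) ⊆ R.verts
  mapsf : ∀ x ∈ U, f x ∈ U'
  mapsg : ∀ y ∈ U', g y ∈ U
  inv1 : ∀ x ∈ U, g (f x) = x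
  inv2 : ∀ y ∈ U', f (g y) = y
  iso : ∀ σ : Finset V, σ ⊆ U → (σ ∈ R.faces ↔ σ.image f ∈ R.faces)

variable {R : SComplex V}

lemma PartIso.injOn (P : PartIso R) : Set.InjOn P.f (P.U : Set V) := by
  intro x hx y hy hxy
  have h := P.inv1 x hx
  rw [hxy, P.inv1 y hy] at h
  exact h.symm

lemma PartIso.iso_g (P : PartIso R) :
    ∀ τ : Finset V, τ ⊆ P.U' → (τ ∈ R.faces ↔ τ.image P.g ∈ R.faces) := by
  intro τ hτ
  have himg : (τ.image P.g).image P.f = τ := by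
    rw [Finset.image_image]
    have : ∀ y ∈ τ, (P.f ∘ P.g) y = id y := fun y hy => P.inv2 y (hτ hy)
    rw [Finset.image_congr this, Finset.image_id]
  have hsub : τ.image P.g ⊆ P.U := by
    intro x hx
    obtain ⟨y, hy, rfl⟩ := Finset.mem_image.mp hx
    exact P.mapsg y (hτ hy)
  rw [P.iso _ hsub, himg]

/-- The flip of a partial isomorphism. -/
def PartIso.flip (P : PartIso R) : PartIso R where
  U := P.U'
  U' := P.U
  f := P.g
  g := P.f
  hU := P.hU'
  hU' := P.hU
  mapsf := P.mapsg
  mapsg := P.mapsf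
  inv1 := P.inv2
  inv2 := P.inv1
  iso := P.iso_g

/-- `Q` extends `P`. -/
def PartIso.Ext (P Q : PartIso R) : Prop :=
  P.U ⊆ Q.U ∧ P.U' ⊆ Q.U' ∧ Set.EqOn Q.f P.f (P.U : Set V) ∧ Set.EqOn Q.g P.g (P.U' : Set V)

lemma PartIso.Ext.refl (P : PartIso R) : P.Ext P :=
  ⟨le_rfl, le_rfl, fun _ _ => rfl, fun _ _ => rfl⟩

lemma PartIso.Ext.trans {P Q S : PartIso R} (h1 : P.Ext Q) (h2 : Q.Ext S) : P.Ext S :=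
  ⟨h1.1.trans h2.1, h1.2.1.trans h2.2.1,
   fun x hx => (h2.2.2.1 (Finset.coe_subset.mpr h1.1 hx)).trans (h1.2.2.1 hx),
   fun y hy => (h2.2.2.2 (Finset.coe_subset.mpr h1.2.1 hy)).trans (h1.2.2.2 hy)⟩

lemma PartIso.Ext.flip {P Q : PartIso R} (h : P.Ext Q) : P.flip.Ext Q.flip :=
  ⟨h.2.1, h.1, h.2.2.2, h.2.2.1⟩

lemma extend_one (hR : ∀ r : ℕ, 1 ≤ r → R.Ample r) (P : PartIso R) (w : V)
    (hw : w ∈ R.verts) : ∃ Q : PartIso R, P.Ext Q ∧ w ∈ Q.U := by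
  by_cases hwU : w ∈ P.U
  · exact ⟨P, PartIso.Ext.refl P, hwU⟩
  -- the subcomplex A of X_{U'}
  set A : Set (Finset V) := (fun σ => σ.image P.f) '' (R.link w ∩ R.induced ↑P.U) with hA
  have hAsub : A ⊆ R.induced ↑P.U' := by
    rintro τ ⟨σ, ⟨hσl, hσf, hσU⟩, rfl⟩
    refine ⟨(P.iso σ (Finset.coe_subset.mp hσU)).mp hσf, ?_⟩
    intro y hy
    obtain ⟨x, hx, rfl⟩ := Finset.mem_image.mp hy
    exact P.mapsf x (Finset.coe_subset.mp hσU hx)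
  have hAdc : DownClosed A := by
    rintro τ ⟨σ, ⟨⟨hσfaces, hwσ, hins⟩, hσf, hσU⟩, rfl⟩ ρ hρ hρne
    have hne' : (σ.filter (fun x => P.f x ∈ ρ)).Nonempty := by
      obtain ⟨y, hy⟩ := hρne
      obtain ⟨x, hx, rfl⟩ := Finset.mem_image.mp (hρ hy)
      exact ⟨x, Finset.mem_filter.mpr ⟨hx, hy⟩⟩
    refine ⟨σ.filter (fun x => P.f x ∈ ρ),
      ⟨⟨R.down_closed hσfaces (Finset.filter_subset _ _) hne',
        fun hx => hwσ (Finset.filter_subset _ _ hx),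
        R.down_closed hins (Finset.insert_subset_insert _ (Finset.filter_subset _ _))
          ⟨w, Finset.mem_insert_self _ _⟩⟩,
       R.down_closed hσf (Finset.filter_subset _ _) hne',
       fun y hy => hσU (Finset.filter_subset _ _ hy)⟩, ?_⟩
    ext y
    simp only [Finset.mem_image, Finset.mem_filter]
    constructor
    · rintro ⟨x, ⟨_, hfx⟩, rfl⟩; exact hfx
    · intro hy
      obtain ⟨x, hx, rfl⟩ := Finset.mem_image.mp (hρ hy)
      exact ⟨x, ⟨hx, hy⟩, rfl⟩
  obtain ⟨v, hv, hvU', hlink⟩ :=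
    (hR (P.U'.card + 1) (by omega)).2 P.U' P.hU' (by omega) A hAsub hAdc
  -- build the extended partial isomorphism
  have hvimg : ∀ σ : Finset V, σ ⊆ P.U → v ∉ σ.image P.f := by
    intro σ hσ hvmem
    obtain ⟨x, hx, hfx⟩ := Finset.mem_image.mp hvmem
    exact hvU' (hfx ▸ P.mapsf x (hσ hx))
  have heq : ∀ σ : Finset V, w ∉ σ → σ.image (Function.update P.f w v) = σ.image P.f :=
    fun σ hσ => Finset.image_congr (fun x hx => by
      have hxw : x ≠ w := fun h => hσ (h ▸ hx)
      exact Function.update_of_ne hxw _ _)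
  refine ⟨⟨insert w P.U, insert v P.U', Function.update P.f w v, Function.update P.g v w,
    ?_, ?_, ?_, ?_, ?_, ?_, ?_⟩, ⟨Finset.subset_insert _ _, Finset.subset_insert _ _, ?_, ?_⟩,
    Finset.mem_insert_self _ _⟩
  · rw [Finset.coe_insert]; exact Set.insert_subset hw P.hU
  · rw [Finset.coe_insert]; exact Set.insert_subset hv P.hU'
  · -- mapsf
    intro x hx
    rcases Finset.mem_insert.mp hx with rfl | hx
    · rw [Function.update_self]; exact Finset.mem_insert_self _ _
    · have hxw : x ≠ w := fun h => hwU (h ▸ hx)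
      rw [Function.update_of_ne hxw]
      exact Finset.mem_insert_of_mem (P.mapsf x hx)
  · -- mapsg
    intro y hy
    rcases Finset.mem_insert.mp hy with rfl | hy
    · rw [Function.update_self]; exact Finset.mem_insert_self _ _
    · have hyv : y ≠ v := fun h => hvU' (h ▸ hy)
      rw [Function.update_of_ne hyv]
      exact Finset.mem_insert_of_mem (P.mapsg y hy)
  · -- inv1
    intro x hx
    rcases Finset.mem_insert.mp hx with rfl | hx
    · rw [Function.update_self, Function.update_self]
    · have hxw : x ≠ w := fun h => hwU (h ▸ hx)
      have hfxv : P.f x ≠ v := fun h => hvU' (h ▸ P.mapsf x hx)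
      rw [Function.update_of_ne hxw, Function.update_of_ne hfxv]
      exact P.inv1 x hx
  · -- inv2
    intro y hy
    rcases Finset.mem_insert.mp hy with rfl | hy
    · rw [Function.update_self, Function.update_self]
    · have hyv : y ≠ v := fun h => hvU' (h ▸ hy)
      have hgyw : P.g y ≠ w := fun h => hwU (h ▸ P.mapsg y hy)
      rw [Function.update_of_ne hyv, Function.update_of_ne hgyw]
      exact P.inv2 y hy
  · -- iso
    intro σ hσ
    by_cases hwσ : w ∈ σ
    · -- σ = insert w σ₀
      set σ₀ := σ.erase w with hσ₀
      have hσ₀U : σ₀ ⊆ P.U := fun x hx => by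
        have := hσ (Finset.mem_of_mem_erase hx)
        rcases Finset.mem_insert.mp this with rfl | h
        · exact absurd rfl (Finset.ne_of_mem_erase hx)
        · exact h
      have hwσ₀ : w ∉ σ₀ := Finset.notMem_erase _ _
      have hσeq : σ = insert w σ₀ := (Finset.insert_erase hwσ).symm
      rw [hσeq, Finset.image_insert, Function.update_self, heq σ₀ hwσ₀]
      rcases Finset.eq_empty_or_nonempty σ₀ with h0 | h0
      · rw [h0]
        simp only [Finset.image_empty]
        exact iff_of_true hw hv
      · have himgne : (σ₀.image P.f).Nonempty := h0.image _
        have hvimgσ₀ : v ∉ σ₀.image P.f := hvimg σ₀ hσ₀U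
        constructor
        · intro hins
          have hσ₀f : σ₀ ∈ R.faces :=
            R.down_closed hins (Finset.subset_insert _ _) h0
          have hmem : σ₀.image P.f ∈ A := ⟨σ₀, ⟨⟨hσ₀f, hwσ₀, hins⟩, hσ₀f, Finset.coe_subset.mpr hσ₀U⟩, rfl⟩
          rw [← hlink] at hmem
          exact hmem.1.2.2
        · intro hins
          have hτf : σ₀.image P.f ∈ R.faces :=
            R.down_closed hins (Finset.subset_insert _ _) himgne
          have hτU' : ↑(σ₀.image P.f) ⊆ (P.U' : Set V) := by
            intro y hy
            obtain ⟨x, hx, rfl⟩ := Finset.mem_image.mp hy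
            exact P.mapsf x (hσ₀U hx)
          have hmem : σ₀.image P.f ∈ A := by
            rw [← hlink]
            exact ⟨⟨hτf, hvimgσ₀, hins⟩, hτf, hτU'⟩
          obtain ⟨σ₁, ⟨hσ₁l, _, hσ₁U⟩, hσ₁eq⟩ := hmem
          have : σ₁ = σ₀ := by
            have h2 : P.f '' ↑σ₁ = P.f '' ↑σ₀ := by
              have h3 : (↑(σ₁.image P.f) : Set V) = ↑(σ₀.image P.f) := congrArg _ hσ₁eq
              rwa [Finset.coe_image, Finset.coe_image] at h3
            rw [← Finset.coe_inj]
            exact P.injOn.image_eq_image_iff hσ₁U (Finset.coe_subset.mpr hσ₀U) |>.mp h2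
          rw [← this]
          exact hσ₁l.2.2
    · -- w ∉ σ
      have hσU : σ ⊆ P.U := fun x hx => by
        rcases Finset.mem_insert.mp (hσ hx) with rfl | h
        · exact absurd hx hwσ
        · exact h
      rw [heq σ hwσ]
      exact P.iso σ hσU
  · -- EqOn f
    intro x hx
    have hxw : x ≠ w := fun h => hwU (h ▸ hx)
    exact Function.update_of_ne hxw _ _
  · -- EqOn g
    intro y hy
    have hyv : y ≠ v := fun h => hvU' (h ▸ hy)
    exact Function.update_of_ne hyv _ _


lemma extend_both (hR : ∀ r : ℕ, 1 ≤ r → R.Ample r) (P : PartIso R) (w : V)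
    (hw : w ∈ R.verts) : ∃ Q : PartIso R, P.Ext Q ∧ w ∈ Q.U ∧ w ∈ Q.U' := by
  obtain ⟨Q1, hQ1, hw1⟩ := extend_one hR P w hw
  obtain ⟨Q2, hQ2, hw2⟩ := extend_one hR Q1.flip w hw
  refine ⟨Q2.flip, hQ1.trans ⟨hQ2.2.1, hQ2.1, hQ2.2.2.2, hQ2.2.2.1⟩, hQ2.2.1 hw1, hw2⟩

end SComplex

open SComplex in
/-- homogeneity of the Rado complex: every isomorphism between finite
induced subcomplexes extends to an automorphism. -/
theorem stmt14 {V : Type*} [DecidableEq V]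
    (R : SComplex V) (hRc : R.verts.Countable) (hRi : R.verts.Infinite)
    (hR : ∀ r : ℕ, 1 ≤ r → R.Ample r)
    (U U' : Set V) (hU : U.Finite) (hU' : U'.Finite)
    (hUv : U ⊆ R.verts) (hU'v : U' ⊆ R.verts)
    (f : V → V) (hf : IsIso f (R.inducedSub U) (R.inducedSub U')) :
    ∃ F : V → V, IsIso F R R ∧ Set.EqOn F f (R.inducedSub U).verts := by
  classical
  haveI : Nonempty V := ⟨hRi.nonempty.choose⟩
  have hvertsU : (R.inducedSub U).verts = U := by
    ext v
    simp only [verts, inducedSub, induced, Set.mem_setOf_eq, Finset.coe_singleton,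
      Set.singleton_subset_iff]
    exact ⟨fun h => h.2, fun h => ⟨hUv h, h⟩⟩
  have hvertsU' : (R.inducedSub U').verts = U' := by
    ext v
    simp only [verts, inducedSub, induced, Set.mem_setOf_eq, Finset.coe_singleton,
      Set.singleton_subset_iff]
    exact ⟨fun h => h.2, fun h => ⟨hU'v h, h⟩⟩
  obtain ⟨hbij, hfaces⟩ := hf
  rw [hvertsU, hvertsU'] at hbij
  set g0 := Function.invFunOn f U with hg0
  have hinv : Set.InvOn g0 f U U' := hbij.invOn_invFunOn
  set P0 : PartIso R := {
    U := hU.toFinset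
    U' := hU'.toFinset
    f := f
    g := g0
    hU := by rw [Set.Finite.coe_toFinset]; exact hUv
    hU' := by rw [Set.Finite.coe_toFinset]; exact hU'v
    mapsf := fun x hx => hU'.mem_toFinset.mpr (hbij.mapsTo (hU.mem_toFinset.mp hx))
    mapsg := fun y hy => hU.mem_toFinset.mpr (hbij.surjOn.mapsTo_invFunOn (hU'.mem_toFinset.mp hy))
    inv1 := fun x hx => hinv.1 (hU.mem_toFinset.mp hx)
    inv2 := fun y hy => hinv.2 (hU'.mem_toFinset.mp hy)
    iso := by
      intro σ hσ
      have hσU : (σ : Set V) ⊆ U := by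
        rw [← hU.coe_toFinset]; exact Finset.coe_subset.mpr hσ
      have h := hfaces σ (by rw [hvertsU]; exact hσU)
      have himgU' : ((σ.image f : Finset V) : Set V) ⊆ U' := by
        intro y hy
        obtain ⟨x, hx, rfl⟩ := Finset.mem_image.mp (Finset.mem_coe.mp hy)
        exact hbij.mapsTo (hσU hx)
      constructor
      · intro hface
        exact ((h.mp ⟨hface, hσU⟩) : _ ∈ R.induced U').1
      · intro hface
        exact ((h.mpr ⟨hface, himgU'⟩) : _ ∈ R.induced U).1 } with hP0
  obtain ⟨e, he⟩ := hRc.exists_eq_range hRi.nonempty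
  have hem : ∀ n, e n ∈ R.verts := fun n => he ▸ Set.mem_range_self n
  have key : ∀ (P : PartIso R) (n : ℕ), ∃ Q : PartIso R, P.Ext Q ∧ e n ∈ Q.U ∧ e n ∈ Q.U' :=
    fun P n => extend_both hR P (e n) (hem n)
  choose step hstep1 hstep2 hstep3 using key
  set Ps : ℕ → PartIso R :=
    fun n => Nat.rec (motive := fun _ => PartIso R) P0 (fun n Q => step Q n) n with hPs
  have mono : ∀ m n, m ≤ n → (Ps m).Ext (Ps n) := by
    intro m n h
    induction n, h using Nat.le_induction with
    | base => exact PartIso.Ext.refl _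
    | succ n hmn ih => exact ih.trans (hstep1 (Ps n) n)
  have cover : ∀ v ∈ R.verts, ∃ n, v ∈ (Ps n).U := by
    intro v hv
    rw [he] at hv
    obtain ⟨m, rfl⟩ := hv
    exact ⟨m + 1, hstep2 (Ps m) m⟩
  have cover' : ∀ v ∈ R.verts, ∃ n, v ∈ (Ps n).U' := by
    intro v hv
    rw [he] at hv
    obtain ⟨m, rfl⟩ := hv
    exact ⟨m + 1, hstep3 (Ps m) m⟩
  set F : V → V := fun v => if h : ∃ n, v ∈ (Ps n).U then (Ps h.choose).f v else v with hF
  set G : V → V := fun v => if h : ∃ n, v ∈ (Ps n).U' then (Ps h.choose).g v else v with hG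
  have Fval : ∀ v n, v ∈ (Ps n).U → F v = (Ps n).f v := by
    intro v n hvn
    have hex : ∃ n, v ∈ (Ps n).U := ⟨n, hvn⟩
    show (if h : ∃ n, v ∈ (Ps n).U then (Ps h.choose).f v else v) = (Ps n).f v
    rw [dif_pos hex]
    have h1 := (mono hex.choose (max hex.choose n) (le_max_left _ _)).2.2.1
      (Finset.mem_coe.mpr hex.choose_spec)
    have h2 := (mono n (max hex.choose n) (le_max_right _ _)).2.2.1 (Finset.mem_coe.mpr hvn)
    rw [← h1, h2]
  have Gval : ∀ v n, v ∈ (Ps n).U' → G v = (Ps n).g v := by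
    intro v n hvn
    have hex : ∃ n, v ∈ (Ps n).U' := ⟨n, hvn⟩
    show (if h : ∃ n, v ∈ (Ps n).U' then (Ps h.choose).g v else v) = (Ps n).g v
    rw [dif_pos hex]
    have h1 := (mono hex.choose (max hex.choose n) (le_max_left _ _)).2.2.2
      (Finset.mem_coe.mpr hex.choose_spec)
    have h2 := (mono n (max hex.choose n) (le_max_right _ _)).2.2.2 (Finset.mem_coe.mpr hvn)
    rw [← h1, h2]
  have mapsF : Set.MapsTo F R.verts R.verts := by
    intro v hv
    obtain ⟨n, hn⟩ := cover v hv
    rw [Fval v n hn]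
    exact (Ps n).hU' (Finset.mem_coe.mpr ((Ps n).mapsf v hn))
  have mapsG : Set.MapsTo G R.verts R.verts := by
    intro v hv
    obtain ⟨n, hn⟩ := cover' v hv
    rw [Gval v n hn]
    exact (Ps n).hU (Finset.mem_coe.mpr ((Ps n).mapsg v hn))
  have hleft : ∀ v ∈ R.verts, G (F v) = v := by
    intro v hv
    obtain ⟨n, hn⟩ := cover v hv
    rw [Fval v n hn, Gval _ n ((Ps n).mapsf v hn)]
    exact (Ps n).inv1 v hn
  have hright : ∀ v ∈ R.verts, F (G v) = v := by
    intro v hv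
    obtain ⟨n, hn⟩ := cover' v hv
    rw [Gval v n hn, Fval _ n ((Ps n).mapsg v hn)]
    exact (Ps n).inv2 v hn
  have fincover : ∀ σ : Finset V, (σ : Set V) ⊆ R.verts → ∃ n, σ ⊆ (Ps n).U := by
    intro σ
    induction σ using Finset.induction_on with
    | empty => exact fun _ => ⟨0, Finset.empty_subset _⟩
    | @insert a s ha ih =>
      intro hsub
      obtain ⟨n, hn⟩ := ih (fun x hx => hsub (Finset.mem_coe.mpr (Finset.mem_insert_of_mem hx)))
      obtain ⟨m, hm⟩ := cover a (hsub (Finset.mem_coe.mpr (Finset.mem_insert_self _ _)))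
      refine ⟨max n m, Finset.insert_subset ?_ (hn.trans (mono n (max n m) (le_max_left _ _)).1)⟩
      exact (mono m (max n m) (le_max_right _ _)).1 hm
  refine ⟨F, ⟨Set.InvOn.bijOn ⟨hleft, hright⟩ mapsF mapsG, ?_⟩, ?_⟩
  · intro σ hσ
    obtain ⟨n, hn⟩ := fincover σ hσ
    have himg : σ.image F = σ.image (Ps n).f :=
      Finset.image_congr (fun x hx => Fval x n (hn hx))
    rw [himg]
    exact (Ps n).iso σ hn
  · intro v hv
    rw [hvertsU] at hv
    have hv0 : v ∈ (Ps 0).U := hU.mem_toFinset.mpr hv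
    rw [Fval v 0 hv0]
    rfl
end

section
/- Every universal and homogeneous simplicial complex with countably infinite vertex set is ∞-ample (hence isomorphic to the Rado complex): if X has countably infinite vertex set, every countable simplicial complex is isomorphic to an induced subcomplex of X, and every isomorphism between finite induced subcomplexes of X extends to an automorphism of X, then X is r-ample for every r ≥ 1. -/
open SComplex

private lemma verts_inducedSub {V : Type} [DecidableEq V] (X : SComplex V) {T : Set V}
    (hT : T ⊆ X.verts) : (X.inducedSub T).verts = T := by
  ext x
  simp only [SComplex.verts, SComplex.inducedSub, SComplex.induced, Set.mem_setOf_eq,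
    Finset.coe_singleton, Set.singleton_subset_iff]
  exact ⟨fun h => h.2, fun h => ⟨hT h, h⟩⟩

private def auxY {V : Type} [DecidableEq V] (X : SComplex V) (U : Finset V)
    (A : Set (Finset V)) : Set (Finset (Option V)) :=
  {τ | ∃ σ : Finset V, σ ∈ X.induced ↑U ∧ τ = σ.image Option.some} ∪
  {({none} : Finset (Option V))} ∪
  {τ | ∃ σ ∈ A, τ = insert none (σ.image Option.some)}

private lemma auxY_some_iff {V : Type} [DecidableEq V] (X : SComplex V) (U : Finset V)
    (A : Set (Finset V)) (σ : Finset V) :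
    σ.image Option.some ∈ auxY X U A ↔ σ ∈ X.induced ↑U := by
  constructor
  · rintro ((⟨ρ, hρ, hσρ⟩ | h) | ⟨ρ, hρ, hσρ⟩)
    · rwa [Finset.image_injective (Option.some_injective V) hσρ]
    · have : (none : Option V) ∈ σ.image Option.some := by
        rw [Set.mem_singleton_iff.mp h]; exact Finset.mem_singleton_self _
      simp at this
    · have : (none : Option V) ∈ σ.image Option.some := by
        rw [hσρ]; exact Finset.mem_insert_self _ _
      simp at this
  · intro h; exact Or.inl (Or.inl ⟨σ, h, rfl⟩)

private lemma auxY_none_iff {V : Type} [DecidableEq V] (X : SComplex V) (U : Finset V)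
    (A : Set (Finset V)) (σ : Finset V) :
    insert none (σ.image Option.some) ∈ auxY X U A ↔ σ ∈ A ∨ σ = ∅ := by
  constructor
  · rintro ((⟨ρ, hρ, h⟩ | h) | ⟨ρ, hρ, h⟩)
    · exfalso
      have : (none : Option V) ∈ ρ.image Option.some := by
        rw [← h]; exact Finset.mem_insert_self _ _
      simp at this
    · right
      rw [Set.mem_singleton_iff] at h
      refine Finset.eq_empty_iff_forall_notMem.mpr fun a ha => ?_
      have : (Option.some a) ∈ insert none (σ.image Option.some) :=
        Finset.mem_insert_of_mem (Finset.mem_image_of_mem _ ha)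
      rw [h, Finset.mem_singleton] at this
      exact Option.some_ne_none a this
    · left
      have h1 : σ.image Option.some = ρ.image Option.some := by
        have e1 : (insert none (σ.image Option.some)).erase none = σ.image Option.some :=
          Finset.erase_insert (by simp)
        have e2 : (insert none (ρ.image Option.some)).erase none = ρ.image Option.some :=
          Finset.erase_insert (by simp)
        rw [← e1, ← e2, h]
      rwa [Finset.image_injective (Option.some_injective V) h1]
  · rintro (h | rfl)
    · exact Or.inr ⟨σ, h, rfl⟩
    · exact Or.inl (Or.inr (by simp))

private def auxYC {V : Type} [DecidableEq V] (X : SComplex V) (U : Finset V)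
    (A : Set (Finset V)) (hA : A ⊆ X.induced ↑U) (hdc : DownClosed A) :
    SComplex (Option V) where
  faces := auxY X U A
  nonempty_of_mem := by
    rintro τ ((⟨σ, hσ, rfl⟩ | h) | ⟨σ, hσ, rfl⟩)
    · exact (X.nonempty_of_mem hσ.1).image _
    · rw [Set.mem_singleton_iff.mp h]; exact ⟨none, Finset.mem_singleton_self _⟩
    · exact ⟨none, Finset.mem_insert_self _ _⟩
  down_closed := by
    rintro τ ((⟨σ, hσ, rfl⟩ | h) | ⟨σ, hσ, rfl⟩) ρ hρ hne
    · obtain ⟨ρ', hρ'σ, rfl⟩ := Finset.subset_image_iff.mp hρ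
      refine Or.inl (Or.inl ⟨ρ', ⟨X.down_closed hσ.1 hρ'σ ?_, fun x hx => hσ.2 (hρ'σ hx)⟩, rfl⟩)
      obtain ⟨x, hx⟩ := hne
      obtain ⟨a, ha, _⟩ := Finset.mem_image.mp hx
      exact ⟨a, ha⟩
    · rw [Set.mem_singleton_iff.mp h] at hρ
      obtain ⟨x, hx⟩ := hne
      have hx1 := Finset.mem_singleton.mp (hρ hx)
      refine Or.inl (Or.inr (Set.mem_singleton_iff.mpr ?_))
      apply Finset.Subset.antisymm hρ
      intro y hy
      rw [Finset.mem_singleton.mp hy, ← hx1]; exact hx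
    · by_cases hn : (none : Option V) ∈ ρ
      · have hsub : ρ.erase none ⊆ σ.image Option.some := by
          intro x hx
          have h1 := hρ (Finset.mem_of_mem_erase hx)
          rcases Finset.mem_insert.mp h1 with h2 | h2
          · exact absurd h2 (Finset.ne_of_mem_erase hx)
          · exact h2
        obtain ⟨ρ', hρ'σ, hρ'⟩ := Finset.subset_image_iff.mp hsub
        have hρeq : ρ = insert none (ρ'.image Option.some) := by
          rw [hρ', Finset.insert_erase hn]
        rcases Finset.eq_empty_or_nonempty ρ' with h0 | h0
        · subst h0
          refine Or.inl (Or.inr (Set.mem_singleton_iff.mpr ?_))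
          rw [hρeq]; simp
        · exact Or.inr ⟨ρ', hdc hσ hρ'σ h0, hρeq⟩
      · have hsub : ρ ⊆ σ.image Option.some := by
          intro x hx
          rcases Finset.mem_insert.mp (hρ hx) with h2 | h2
          · exact absurd (h2 ▸ hx) hn
          · exact h2
        obtain ⟨ρ', hρ'σ, rfl⟩ := Finset.subset_image_iff.mp hsub
        have h0 : ρ'.Nonempty := by
          obtain ⟨x, hx⟩ := hne
          obtain ⟨a, ha, _⟩ := Finset.mem_image.mp hx
          exact ⟨a, ha⟩
        exact Or.inl (Or.inl ⟨ρ', hA (hdc hσ hρ'σ h0), rfl⟩)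

private lemma auxYC_verts {V : Type} [DecidableEq V] (X : SComplex V) (U : Finset V)
    (A : Set (Finset V)) (hA : A ⊆ X.induced ↑U) (hdc : DownClosed A)
    (hU : ↑U ⊆ X.verts) :
    (auxYC X U A hA hdc).verts = Option.some '' ↑U ∪ {none} := by
  ext x
  cases x with
  | none =>
    simp only [Set.mem_union, Set.mem_image, Set.mem_singleton_iff]
    constructor
    · intro _; right; trivial
    · intro _
      show ({none} : Finset (Option V)) ∈ auxY X U A
      exact Or.inl (Or.inr rfl)
  | some u =>
    have key : ({Option.some u} : Finset (Option V)) ∈ auxY X U A ↔ u ∈ U := by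
      have h1 : ({Option.some u} : Finset (Option V)) = ({u} : Finset V).image Option.some := by
        simp
      rw [h1, auxY_some_iff]
      constructor
      · intro h; exact h.2 (by simp)
      · intro h; exact ⟨hU h, by simpa using h⟩
    simp only [Set.mem_union, Set.mem_image, Set.mem_singleton_iff]
    constructor
    · intro h; exact Or.inl ⟨u, key.mp h, rfl⟩
    · rintro (⟨a, ha, hae⟩ | h)
      · show ({Option.some u} : Finset (Option V)) ∈ auxY X U A
        exact key.mpr ((Option.some_injective V hae) ▸ ha)
      · exact absurd h (Option.some_ne_none u)

open SComplex in
/-- a universal and homogeneous simplicial complex with countably infinite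
vertex set is `r`-ample for every `r ≥ 1`. -/
theorem stmt15 {V : Type} [DecidableEq V] (X : SComplex V)
    (hc : X.verts.Countable) (hi : X.verts.Infinite)
    (huniv : ∀ (W : Type) (Y : SComplex W), Y.verts.Countable →
      ∃ S : Set V, S ⊆ X.verts ∧ ∃ f : W → V, IsIso f Y (X.inducedSub S))
    (hhom : ∀ U U' : Set V, U.Finite → U'.Finite → U ⊆ X.verts → U' ⊆ X.verts →
      ∀ f : V → V, IsIso f (X.inducedSub U) (X.inducedSub U') →
        ∃ F : V → V, IsIso F X X ∧ Set.EqOn F f (X.inducedSub U).verts) :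
    ∀ r : ℕ, 1 ≤ r → X.Ample r := by
  classical
  intro r _hr
  obtain ⟨v0, hv0⟩ := hi.nonempty
  haveI : Nonempty V := ⟨v0⟩
  refine ⟨⟨{v0}, hv0⟩, ?_⟩
  intro U hU _hcard A hA hdc
  set Y := auxYC X U A hA hdc with hYdef
  have hYfaces : Y.faces = auxY X U A := rfl
  have hYverts : Y.verts = Option.some '' ↑U ∪ {none} := auxYC_verts X U A hA hdc hU
  have hYc : Y.verts.Countable := by
    rw [hYverts]
    exact ((U.finite_toSet.image _).union (Set.finite_singleton _)).countable
  obtain ⟨S, hS, f, hf⟩ := huniv (Option V) Y hYc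
  have hSv : (X.inducedSub S).verts = S := verts_inducedSub X hS
  have hmap : ∀ w ∈ Y.verts, f w ∈ S := fun w hw => hSv ▸ hf.1.1 hw
  have hinjf : Set.InjOn f Y.verts := hf.1.2.1
  have hfacef : ∀ ρ : Finset (Option V), ↑ρ ⊆ Y.verts →
      (ρ ∈ Y.faces ↔ ρ.image f ∈ X.faces ∧ ↑(ρ.image f) ⊆ S) := fun ρ hρ => hf.2 ρ hρ
  set g₁ : V → V := fun u => f (Option.some u) with hg₁
  have hsomeU : ∀ u ∈ U, Option.some u ∈ Y.verts := fun u hu => by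
    rw [hYverts]; exact Or.inl ⟨u, hu, rfl⟩
  have hnoneY : (none : Option V) ∈ Y.verts := by rw [hYverts]; exact Or.inr rfl
  have hg₁S : ∀ u ∈ U, g₁ u ∈ S := fun u hu => hmap _ (hsomeU u hu)
  have keyiff : ∀ ρ : Finset V, ↑ρ ⊆ (U : Set V) →
      (ρ.image g₁ ∈ X.faces ↔ ρ ∈ X.faces) := by
    intro ρ hρ
    have h1 : ↑(ρ.image Option.some) ⊆ Y.verts := by
      intro x hx
      simp only [Finset.coe_image, Set.mem_image, Finset.mem_coe] at hx
      obtain ⟨u, hu, rfl⟩ := hx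
      exact hsomeU u (hρ hu)
    have h2 := hfacef _ h1
    rw [Finset.image_image] at h2
    have h3 : (ρ.image Option.some ∈ Y.faces) ↔ ρ ∈ X.induced ↑U := by
      rw [hYfaces]; exact auxY_some_iff X U A ρ
    have himg : ρ.image (f ∘ Option.some) = ρ.image g₁ := rfl
    rw [himg] at h2
    have h4 : ↑(ρ.image g₁) ⊆ S := by
      intro x hx
      simp only [Finset.coe_image, Set.mem_image, Finset.mem_coe] at hx
      obtain ⟨u, hu, rfl⟩ := hx
      exact hg₁S u (hρ hu)
    constructor
    · intro h
      exact (h3.mp (h2.mpr ⟨h, h4⟩)).1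
    · intro h
      exact (h2.mp (h3.mpr ⟨h, hρ⟩)).1
  set U₁ : Finset V := U.image g₁ with hU₁def
  have hU₁S : ↑U₁ ⊆ S := by
    intro x hx
    simp only [hU₁def, Finset.coe_image, Set.mem_image, Finset.mem_coe] at hx
    obtain ⟨u, hu, rfl⟩ := hx
    exact hg₁S u hu
  have hU₁v : ↑U₁ ⊆ X.verts := fun x hx => hS (hU₁S hx)
  set h : V → V := Function.invFunOn g₁ ↑U with hhdef
  have hinv : ∀ u ∈ U, h (g₁ u) = u := by
    intro u hu
    have hex : ∃ a ∈ (U : Set V), g₁ a = g₁ u := ⟨u, hu, rfl⟩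
    have h1 := Function.invFunOn_eq hex
    have h2 := Function.invFunOn_mem hex
    have h3 := hinjf (hsomeU _ h2) (hsomeU u hu) h1
    exact Option.some_injective V h3
  have hbij : Set.BijOn h ↑U₁ ↑U := by
    refine ⟨?_, ?_, ?_⟩
    · intro x hx
      simp only [hU₁def, Finset.coe_image, Set.mem_image, Finset.mem_coe] at hx
      obtain ⟨u, hu, rfl⟩ := hx
      rw [hinv u hu]; exact hu
    · intro x hx y hy hxy
      simp only [hU₁def, Finset.coe_image, Set.mem_image, Finset.mem_coe] at hx hy
      obtain ⟨u, hu, rfl⟩ := hx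
      obtain ⟨u', hu', rfl⟩ := hy
      rw [hinv u hu, hinv u' hu'] at hxy
      rw [hxy]
    · intro u hu
      exact ⟨g₁ u, by simp only [hU₁def, Finset.coe_image]; exact Set.mem_image_of_mem _ hu,
        hinv u hu⟩
  have hfaces : ∀ σ : Finset V, ↑σ ⊆ (↑U₁ : Set V) →
      (σ ∈ (X.inducedSub ↑U₁).faces ↔ σ.image h ∈ (X.inducedSub ↑U).faces) := by
    intro σ hσ
    obtain ⟨ρ, hρU, rfl⟩ : ∃ ρ, ρ ⊆ U ∧ ρ.image g₁ = σ := by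
      have hsub : σ ⊆ U.image g₁ := by
        intro x hx
        exact Finset.mem_coe.mp (hσ hx)
      exact Finset.subset_image_iff.mp hsub
    have himg : (ρ.image g₁).image h = ρ := by
      rw [Finset.image_image]
      rw [show ρ.image (h ∘ g₁) = ρ.image id from
        Finset.image_congr (fun x hx => hinv x (hρU hx))]
      exact Finset.image_id
    have hρU' : ↑ρ ⊆ (U : Set V) := fun x hx => hρU hx
    constructor
    · intro hmem
      rw [himg]
      exact ⟨(keyiff ρ hρU').mp hmem.1, hρU'⟩
    · intro hmem
      rw [himg] at hmem
      exact ⟨(keyiff ρ hρU').mpr hmem.1, hσ⟩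
  have hiso : IsIso h (X.inducedSub ↑U₁) (X.inducedSub ↑U) := by
    constructor
    · rw [verts_inducedSub X hU₁v, verts_inducedSub X hU]; exact hbij
    · intro σ hσ
      rw [verts_inducedSub X hU₁v] at hσ
      exact hfaces σ hσ
  obtain ⟨F, hF, hFeq⟩ := hhom ↑U₁ ↑U (Finset.finite_toSet _) (Finset.finite_toSet _)
    hU₁v hU h hiso
  rw [verts_inducedSub X hU₁v] at hFeq
  have hFu : ∀ u ∈ U, F (g₁ u) = u := by
    intro u hu
    have : g₁ u ∈ (↑U₁ : Set V) := by
      simp only [hU₁def, Finset.coe_image]; exact Set.mem_image_of_mem _ hu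
    rw [hFeq this]; exact hinv u hu
  have hFface : ∀ σ : Finset V, ↑σ ⊆ X.verts → (σ ∈ X.faces ↔ σ.image F ∈ X.faces) := by
    intro σ hσ
    have := hF.2 σ hσ
    exact this
  set v : V := F (f none) with hvdef
  have hfnS : f none ∈ S := hmap none hnoneY
  have hfnv : f none ∈ X.verts := hS hfnS
  have hvv : v ∈ X.verts := hF.1.1 hfnv
  have hvU : v ∉ U := by
    intro hvU
    have h1 : F (g₁ v) = v := hFu v hvU
    have h2 : g₁ v = f none := hF.1.2.1 (hS (hg₁S v hvU)) hfnv (by rw [h1])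
    have h3 := hinjf (hsomeU v hvU) hnoneY h2
    exact Option.some_ne_none v h3
  have chain : ∀ σ : Finset V, ↑σ ⊆ (U : Set V) → σ.Nonempty →
      (insert v σ ∈ X.faces ↔ σ ∈ A) := by
    intro σ hσU hσne
    set τ : Finset (Option V) := insert none (σ.image Option.some) with hτdef
    have hτY : ↑τ ⊆ Y.verts := by
      intro x hx
      simp only [hτdef, Finset.coe_insert, Set.mem_insert_iff, Finset.coe_image,
        Set.mem_image, Finset.mem_coe] at hx
      rcases hx with rfl | ⟨u, hu, rfl⟩
      · exact hnoneY
      · exact hsomeU u (hσU hu)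
    have hτf : τ.image f = insert (f none) (σ.image g₁) := by
      rw [hτdef, Finset.image_insert, Finset.image_image]
      rfl
    have hτfS : ↑(τ.image f) ⊆ S := by
      rw [hτf]
      intro x hx
      simp only [Finset.coe_insert, Set.mem_insert_iff, Finset.coe_image, Set.mem_image,
        Finset.mem_coe] at hx
      rcases hx with rfl | ⟨u, hu, rfl⟩
      · exact hfnS
      · exact hg₁S u (hσU hu)
    have hτfv : ↑(τ.image f) ⊆ X.verts := fun x hx => hS (hτfS hx)
    have himgF : (τ.image f).image F = insert v σ := by
      rw [hτf, Finset.image_insert, Finset.image_image, ← hvdef]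
      congr 1
      rw [show σ.image (F ∘ g₁) = σ.image id from
        Finset.image_congr (fun x hx => hFu x (hσU hx))]
      exact Finset.image_id
    have c1 : insert v σ ∈ X.faces ↔ τ.image f ∈ X.faces := by
      rw [← himgF]
      exact (hFface _ hτfv).symm
    have c2 : τ.image f ∈ X.faces ↔ τ ∈ Y.faces :=
      ⟨fun hm => (hfacef τ hτY).mpr ⟨hm, hτfS⟩, fun hm => ((hfacef τ hτY).mp hm).1⟩
    have c3 : τ ∈ Y.faces ↔ σ ∈ A := by
      rw [hYfaces, hτdef, auxY_none_iff X U A σ]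
      constructor
      · rintro (hm | rfl)
        · exact hm
        · exact absurd rfl hσne.ne_empty
      · exact Or.inl
    exact (c1.trans c2).trans c3
  refine ⟨v, hvv, hvU, ?_⟩
  ext σ
  constructor
  · rintro ⟨⟨hσf, hvσ, hins⟩, hσX, hσU⟩
    exact (chain σ hσU (X.nonempty_of_mem hσX)).mp hins
  · intro hσA
    have hσI := hA hσA
    have hσU : ↑σ ⊆ (U : Set V) := hσI.2
    have hσne := X.nonempty_of_mem hσI.1
    refine ⟨⟨hσI.1, fun hvσ => hvU (hσU hvσ), (chain σ hσU hσne).mpr hσA⟩, hσI⟩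
end

section
/- Let X be an ∞-ample simplicial complex with countably infinite vertex set, let U ⊆ V(X) be a finite subset and A ⊆ X_U a subcomplex. Let Z_{U,A} denote the set of vertexes v ∈ V(X) \ U satisfying Lk_X(v) ∩ X_U = A. Then Z_{U,A} is infinite, and the induced subcomplex of X on Z_{U,A} is itself ∞-ample (i.e., a Rado complex). -/
open SComplex in
/-- in a Rado complex, for finite `U ⊆ V(X)` and a subcomplex `A ⊆ X_U`,
the set `Z_{U,A}` of vertexes `v ∉ U` with `Lk_X(v) ∩ X_U = A` is infinite, and the
induced subcomplex on it is again `∞`-ample. -/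
theorem stmt16 {V : Type*} [DecidableEq V] (X : SComplex V)
    (hc : X.verts.Countable) (hi : X.verts.Infinite)
    (hX : ∀ r : ℕ, 1 ≤ r → X.Ample r)
    (U : Finset V) (hU : (U : Set V) ⊆ X.verts)
    (A : Set (Finset V)) (hA : A ⊆ X.induced (U : Set V)) (hAdc : DownClosed A) :
    {v | v ∈ X.verts ∧ v ∉ U ∧ X.link v ∩ X.induced (U : Set V) = A}.Infinite ∧
      ∀ r : ℕ, 1 ≤ r →
        (X.inducedSub
          {v | v ∈ X.verts ∧ v ∉ U ∧ X.link v ∩ X.induced (U : Set V) = A}).Ample r := by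
  classical
  set Z : Set V := {v | v ∈ X.verts ∧ v ∉ U ∧ X.link v ∩ X.induced (U : Set V) = A} with hZdef
  have hZsub : Z ⊆ X.verts := fun v hv => hv.1
  have hZU : ∀ v ∈ Z, v ∉ U := fun v hv => hv.2.1
  -- main construction: find a vertex in Z avoiding U' with prescribed link trace B
  have key : ∀ U' : Finset V, (U' : Set V) ⊆ Z →
      ∀ B : Set (Finset V), B ⊆ X.induced (U' : Set V) → DownClosed B →
        ∃ v ∈ Z, v ∉ U' ∧ X.link v ∩ X.induced (U' : Set V) = B := by
    intro U' hU'Z B hB hBdc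
    obtain ⟨_, h⟩ := hX ((U ∪ U').card + 1) (Nat.le_add_left 1 _)
    have hUsub : X.induced (U : Set V) ⊆ X.induced ((U ∪ U' : Finset V) : Set V) := by
      rintro σ ⟨h1, h2⟩
      exact ⟨h1, h2.trans (by simp only [Finset.coe_union]; exact Set.subset_union_left)⟩
    have hU'sub : X.induced (U' : Set V) ⊆ X.induced ((U ∪ U' : Finset V) : Set V) := by
      rintro σ ⟨h1, h2⟩
      exact ⟨h1, h2.trans (by simp only [Finset.coe_union]; exact Set.subset_union_right)⟩
    have hdisj : ∀ σ : Finset V, σ ∈ X.faces → (σ : Set V) ⊆ (U : Set V) →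
        (σ : Set V) ⊆ (U' : Set V) → False := by
      intro σ hσ h1 h2
      obtain ⟨x, hx⟩ := X.nonempty_of_mem hσ
      exact hZU x (hU'Z (h2 hx)) (h1 hx)
    obtain ⟨v, hv, hvnot, hlink⟩ := h (U ∪ U')
      (by
        intro x hx
        simp only [Finset.coe_union, Set.mem_union] at hx
        rcases hx with h1 | h1
        · exact hU h1
        · exact hZsub (hU'Z h1))
      (Nat.le_succ _) (A ∪ B)
      (by
        rintro σ (hσ | hσ)
        · exact hUsub (hA hσ)
        · exact hU'sub (hB hσ))
      (by
        rintro σ (hσ | hσ) τ hτ hne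
        · exact Or.inl (hAdc hσ hτ hne)
        · exact Or.inr (hBdc hσ hτ hne))
    have hvU : v ∉ U := fun h => hvnot (Finset.mem_union_left _ h)
    have hvU' : v ∉ U' := fun h => hvnot (Finset.mem_union_right _ h)
    have hAU : X.link v ∩ X.induced (U : Set V) = A := by
      apply subset_antisymm
      · rintro σ ⟨h1, h2⟩
        have hmem : σ ∈ X.link v ∩ X.induced ((U ∪ U' : Finset V) : Set V) :=
          ⟨h1, hUsub h2⟩
        rw [hlink] at hmem
        rcases hmem with hσ | hσ
        · exact hσ
        · exact (hdisj σ h2.1 h2.2 (hB hσ).2).elim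
      · intro σ hσ
        have hmem : σ ∈ X.link v ∩ X.induced ((U ∪ U' : Finset V) : Set V) := by
          rw [hlink]; exact Or.inl hσ
        exact ⟨hmem.1, hA hσ⟩
    have hBU : X.link v ∩ X.induced (U' : Set V) = B := by
      apply subset_antisymm
      · rintro σ ⟨h1, h2⟩
        have hmem : σ ∈ X.link v ∩ X.induced ((U ∪ U' : Finset V) : Set V) :=
          ⟨h1, hU'sub h2⟩
        rw [hlink] at hmem
        rcases hmem with hσ | hσ
        · exact (hdisj σ h2.1 (hA hσ).2 h2.2).elim
        · exact hσ
      · intro σ hσ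
        have hmem : σ ∈ X.link v ∩ X.induced ((U ∪ U' : Finset V) : Set V) := by
          rw [hlink]; exact Or.inr hσ
        exact ⟨hmem.1, hB hσ⟩
    exact ⟨v, ⟨hv, hvU, hAU⟩, hvU', hBU⟩
  have hZne : ∀ F : Finset V, (F : Set V) ⊆ Z → ∃ v ∈ Z, v ∉ F := by
    intro F hF
    obtain ⟨v, hvZ, hvF, -⟩ := key F hF ∅ (by simp) (by intro σ h; exact absurd h (by simp))
    exact ⟨v, hvZ, hvF⟩
  constructor
  · -- Z is infinite
    intro hf
    obtain ⟨v, hvZ, hvF⟩ := hZne hf.toFinset (by simp)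
    exact hvF (hf.mem_toFinset.mpr hvZ)
  · intro r hr
    constructor
    · -- nonempty
      obtain ⟨v, hvZ, -⟩ := hZne ∅ (by simp)
      exact ⟨{v}, hvZ.1, by simpa using hvZ⟩
    · intro U' hU' hcard B hB hBdc
      have hU'Z : (U' : Set V) ⊆ Z := by
        intro x hx
        have h2 := (hU' hx).2
        simpa using h2
      have hBX : B ⊆ X.induced (U' : Set V) := fun σ h => ⟨(hB h).1.1, (hB h).2⟩
      obtain ⟨v, hvZ, hvU', hBU⟩ := key U' hU'Z B hBX hBdc
      refine ⟨v, ⟨hvZ.1, by simpa using hvZ⟩, hvU', ?_⟩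
      ext σ
      constructor
      · rintro ⟨⟨hσf, hvσ, hins⟩, hind⟩
        have : σ ∈ X.link v ∩ X.induced (U' : Set V) := ⟨⟨hσf.1, hvσ, hins.1⟩, hσf.1, hind.2⟩
        rw [hBU] at this
        exact this
      · intro hσ
        have hmem : σ ∈ X.link v ∩ X.induced (U' : Set V) := by rw [hBU]; exact hσ
        obtain ⟨⟨h1, h2, h3⟩, h4, h5⟩ := hmem
        have hσZ : (σ : Set V) ⊆ Z := h5.trans hU'Z
        refine ⟨⟨⟨h1, hσZ⟩, h2, ⟨h3, ?_⟩⟩, ⟨h1, hσZ⟩, h5⟩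
        intro x hx
        simp only [Finset.coe_insert, Set.mem_insert_iff] at hx
        rcases hx with rfl | hx
        · exact hvZ
        · exact hσZ hx
end

section
/- The Rado complex is indestructible: let X be an ∞-ample simplicial complex with countably infinite vertex set, let F be a finite set of simplexes of X, and let Y be the complex obtained from X by deleting all simplexes that contain some simplex of F as a face, i.e., Y = { σ ∈ X : no τ ∈ F satisfies τ ⊆ σ }. Then Y is again an ∞-ample simplicial complex with countably infinite vertex set (a Rado complex). -/
open SComplex in
/-- indestructibility: removing a finite set of simplexes from a Rado
complex leaves an `∞`-ample complex with countably infinite vertex set. -/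
theorem stmt17 {V : Type*} [DecidableEq V] (X : SComplex V)
    (hc : X.verts.Countable) (hi : X.verts.Infinite)
    (hX : ∀ r : ℕ, 1 ≤ r → X.Ample r)
    (F : Set (Finset V)) (hF : F ⊆ X.faces) (hFfin : F.Finite) :
    (X.remove F).verts.Countable ∧ (X.remove F).verts.Infinite ∧
      ∀ r : ℕ, 1 ≤ r → (X.remove F).Ample r := by
  classical
  set Y := X.remove F with hY
  set S : Finset V := hFfin.toFinset.biUnion id with hS
  have hmemS : ∀ v : V, v ∈ S ↔ ∃ τ ∈ F, v ∈ τ := by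
    intro v
    simp [hS, Set.Finite.mem_toFinset]
  have hSsub : (S : Set V) ⊆ X.verts := by
    intro v hv
    obtain ⟨τ, hτF, hvτ⟩ := (hmemS v).1 hv
    exact X.down_closed (hF hτF) (Finset.singleton_subset_iff.mpr hvτ) ⟨v, Finset.mem_singleton_self v⟩
  have hvertsY : X.verts \ (S : Set V) ⊆ Y.verts := by
    rintro v ⟨hv, hvS⟩
    refine ⟨hv, fun τ hτ hsub => hvS ?_⟩
    have hne : τ.Nonempty := X.nonempty_of_mem (hF hτ)
    have : τ = {v} := by
      rcases Finset.subset_singleton_iff.1 hsub with h | h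
      · exact absurd h (Finset.nonempty_iff_ne_empty.1 hne)
      · exact h
    exact (hmemS v).2 ⟨τ, hτ, this ▸ Finset.mem_singleton_self v⟩
  have hYsubX : Y.verts ⊆ X.verts := fun v hv => hv.1
  have hYinf : Y.verts.Infinite := ((hi.diff (S.finite_toSet)).mono hvertsY)
  refine ⟨hc.mono hYsubX, hYinf, ?_⟩
  intro r hr
  obtain ⟨w, hw⟩ := hYinf.nonempty
  refine ⟨⟨{w}, hw⟩, ?_⟩
  intro U hU hUr A hA hAdc
  -- enlarge U to include all vertices of F
  set U' : Finset V := U ∪ S with hU'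
  have hU'sub : (U' : Set V) ⊆ X.verts := by
    intro v hv
    rcases Finset.mem_union.1 hv with h | h
    · exact hYsubX (hU h)
    · exact hSsub h
  have hA' : A ⊆ X.induced (U' : Set V) := by
    intro σ hσ
    obtain ⟨hσY, hσU⟩ := hA hσ
    exact ⟨hσY.1, hσU.trans (by simp [hU'])⟩
  obtain ⟨v, hvX, hvU', hlink⟩ :=
    (hX (U'.card + 1) (by omega)).2 U' hU'sub (by omega) A hA' hAdc
  have hvU : v ∉ U := fun h => hvU' (Finset.mem_union_left _ h)
  have hvS : v ∉ S := fun h => hvU' (Finset.mem_union_right _ h)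
  have hvF : ∀ τ ∈ F, v ∉ τ := fun τ hτ hvτ => hvS ((hmemS v).2 ⟨τ, hτ, hvτ⟩)
  have hvY : v ∈ Y.verts := by
    refine ⟨hvX, fun τ hτ hsub => ?_⟩
    have hne : τ.Nonempty := X.nonempty_of_mem (hF hτ)
    have : τ = {v} := by
      rcases Finset.subset_singleton_iff.1 hsub with h | h
      · exact absurd h (Finset.nonempty_iff_ne_empty.1 hne)
      · exact h
    exact hvF τ hτ (this ▸ Finset.mem_singleton_self v)
  refine ⟨v, hvY, hvU, ?_⟩
  ext σ
  constructor
  · rintro ⟨⟨hσY, hvσ, hinsY⟩, hσY2, hσU⟩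
    have : σ ∈ X.link v ∩ X.induced (U' : Set V) :=
      ⟨⟨hσY.1, hvσ, hinsY.1⟩, hσY.1, hσU.trans (by simp [hU'])⟩
    rwa [hlink] at this
  · intro hσA
    have hσX : σ ∈ X.link v ∩ X.induced (U' : Set V) := hlink ▸ hσA
    obtain ⟨⟨hσXf, hvσ, hinsX⟩, -, -⟩ := hσX
    obtain ⟨hσYf, hσU⟩ := hA hσA
    have hinsY : insert v σ ∈ Y.faces := by
      refine ⟨hinsX, fun τ hτ hsub => hσYf.2 τ hτ ?_⟩
      exact (Finset.subset_insert_iff_of_notMem (hvF τ hτ)).1 hsub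
    exact ⟨⟨hσYf, hvσ, hinsY⟩, hσYf, hσU⟩
end

section
/- Let X be an ∞-ample simplicial complex with countably infinite vertex set. If the vertex set V(X) is partitioned into finitely many parts V(X) = V₁ ⊔ V₂ ⊔ … ⊔ V_k, then the induced subcomplex of X on at least one of the parts V_i is ∞-ample (a Rado complex). -/
open SComplex in
lemma stmt18_verts_inducedSub {V : Type*} (X : SComplex V) (S : Set V) :
    (X.inducedSub S).verts = X.verts ∩ S := by
  ext v
  simp [SComplex.verts, SComplex.inducedSub, SComplex.induced]

open SComplex in
/-- if the vertex set of a Rado complex is partitioned into finitely many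
parts, the induced subcomplex on at least one part is `∞`-ample. -/
theorem stmt18 {V : Type*} [DecidableEq V] (X : SComplex V)
    (hc : X.verts.Countable) (hi : X.verts.Infinite)
    (hX : ∀ r : ℕ, 1 ≤ r → X.Ample r)
    (k : ℕ) (P : Fin k → Set V)
    (hdisj : Pairwise fun i j => Disjoint (P i) (P j))
    (hcover : ⋃ i, P i = X.verts) :
    ∃ i, ∀ r : ℕ, 1 ≤ r → (X.inducedSub (P i)).Ample r := by
  classical
  by_contra hcon
  push_neg at hcon
  -- For each part, extract a finite set `Ui` and family `Ai` witnessing the failure.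
  have key : ∀ i : Fin k, ∃ (Ui : Finset V) (Ai : Set (Finset V)),
      (↑Ui : Set V) ⊆ X.verts ∩ P i ∧ Ai ⊆ X.induced (↑Ui) ∧ DownClosed Ai ∧
      (∀ σ ∈ Ai, (σ : Set V) ⊆ P i) ∧
      ∀ v ∈ (X.inducedSub (P i)).verts, v ∉ Ui →
        (X.inducedSub (P i)).link v ∩ (X.inducedSub (P i)).induced (↑Ui) ≠ Ai := by
    intro i
    obtain ⟨r, hr1, hni⟩ := hcon i
    by_cases hne : (X.inducedSub (P i)).faces.Nonempty
    · have hf : ¬ ∀ U : Finset V, (↑U : Set V) ⊆ (X.inducedSub (P i)).verts → U.card ≤ r →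
          ∀ A : Set (Finset V), A ⊆ (X.inducedSub (P i)).induced (↑U) → DownClosed A →
            ∃ v ∈ (X.inducedSub (P i)).verts, v ∉ U ∧
              (X.inducedSub (P i)).link v ∩ (X.inducedSub (P i)).induced (↑U) = A :=
        fun hall => hni ⟨hne, hall⟩
      push_neg at hf
      obtain ⟨U, hUv, hUc, A, hA, hDC, hwit⟩ := hf
      refine ⟨U, A, ?_, ?_, hDC, ?_, ?_⟩
      · rw [stmt18_verts_inducedSub] at hUv; exact hUv
      · intro σ hσ
        have := hA hσ
        exact ⟨this.1.1, this.2⟩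
      · intro σ hσ
        exact (hA hσ).1.2
      · intro v hv hvU heq
        exact (hwit v hv hvU) heq
    · refine ⟨∅, ∅, by simp, by simp, fun σ h => absurd h (Set.notMem_empty σ), by simp, ?_⟩
      intro v hv _ _
      exact hne ⟨{v}, hv⟩
  choose Ui Ai hUsub hAsub hADC hAP hAwit using key
  set U : Finset V := Finset.univ.biUnion Ui with hU
  set A : Set (Finset V) := ⋃ i, Ai i with hA
  have hUverts : (↑U : Set V) ⊆ X.verts := by
    intro v hv
    rw [hU] at hv
    simp only [Finset.coe_biUnion, Finset.coe_univ, Set.mem_iUnion, Set.mem_univ,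
      Set.iUnion_true] at hv
    obtain ⟨i, hi⟩ := hv
    exact (hUsub i hi).1
  have hUiU : ∀ i, Ui i ⊆ U := fun i => Finset.subset_biUnion_of_mem Ui (Finset.mem_univ i)
  have hAind : A ⊆ X.induced (↑U) := by
    intro σ hσ
    rw [hA] at hσ
    obtain ⟨i, hi⟩ := Set.mem_iUnion.mp hσ
    obtain ⟨h1, h2⟩ := hAsub i hi
    exact ⟨h1, h2.trans (Finset.coe_subset.mpr (hUiU i))⟩
  have hADC' : DownClosed A := by
    intro σ hσ τ hτ hne
    rw [hA] at hσ ⊢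
    obtain ⟨i, hi⟩ := Set.mem_iUnion.mp hσ
    exact Set.mem_iUnion.mpr ⟨i, hADC i hi hτ hne⟩
  obtain ⟨hXne, hamp⟩ := hX (max U.card 1) (le_max_right _ _)
  obtain ⟨v, hvX, hvU, hlink⟩ := hamp U hUverts (le_max_left _ _) A hAind hADC'
  have hvcov : v ∈ ⋃ i, P i := hcover ▸ hvX
  obtain ⟨i, hvi⟩ := Set.mem_iUnion.mp hvcov
  refine hAwit i v ?_ ?_ ?_
  · rw [stmt18_verts_inducedSub]; exact ⟨hvX, hvi⟩
  · exact fun h => hvU (hUiU i h)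
  · -- show Lk_{X_i}(v) ∩ (X_i)_{U_i} = A_i
    ext σ
    constructor
    · rintro ⟨⟨⟨hσX, hσP⟩, hvσ, hins, _⟩, _, hσUi⟩
      have hσA : σ ∈ A := by
        rw [← hlink]
        exact ⟨⟨hσX, hvσ, hins⟩, hσX, hσUi.trans (Finset.coe_subset.mpr (hUiU i))⟩
      rw [hA] at hσA
      obtain ⟨j, hj⟩ := Set.mem_iUnion.mp hσA
      rcases eq_or_ne j i with rfl | hji
      · exact hj
      · exfalso
        have hσPj : (σ : Set V) ⊆ P j := hAP j σ hj
        have hσPi : (σ : Set V) ⊆ P i := hσUi.trans fun x hx => ((hUsub i) hx).2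
        obtain ⟨x, hx⟩ := X.nonempty_of_mem hσX
        exact (hdisj hji).ne_of_mem (hσPj hx) (hσPi hx) rfl
    · intro hσ
      have hσA : σ ∈ A := hA ▸ Set.mem_iUnion.mpr ⟨i, hσ⟩
      have hσlk : σ ∈ X.link v ∩ X.induced (↑U) := hlink.symm ▸ hσA
      obtain ⟨⟨hσX, hvσ, hins⟩, _⟩ := hσlk
      have hσUi : (σ : Set V) ⊆ (↑(Ui i) : Set V) := (hAsub i hσ).2
      have hσPi : (σ : Set V) ⊆ P i := hσUi.trans fun x hx => ((hUsub i) hx).2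
      refine ⟨⟨⟨hσX, hσPi⟩, hvσ, hins, ?_⟩, ⟨hσX, hσPi⟩, hσUi⟩
      rw [Finset.coe_insert]
      exact Set.insert_subset hvi hσPi
end

section
/- In an ∞-ample simplicial complex X with countably infinite vertex set, the link Lk_X(σ) of every simplex σ ∈ X is itself an ∞-ample simplicial complex with countably infinite vertex set (a Rado complex). -/
open SComplex in
/-- in a Rado complex, the link of every simplex is again an `∞`-ample
complex with countably infinite vertex set. -/
theorem stmt19 {V : Type*} [DecidableEq V] (X : SComplex V)
    (hc : X.verts.Countable) (hi : X.verts.Infinite)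
    (hX : ∀ r : ℕ, 1 ≤ r → X.Ample r)
    (σ : Finset V) (hσ : σ ∈ X.faces) :
    (X.linkSimplex σ).verts.Countable ∧ (X.linkSimplex σ).verts.Infinite ∧
      ∀ r : ℕ, 1 ≤ r → (X.linkSimplex σ).Ample r := by
  classical
  set Y := X.linkSimplex σ with hYdef
  have hσne : σ.Nonempty := X.nonempty_of_mem hσ
  have hσV : (σ : Set V) ⊆ X.verts := fun v hv =>
    X.down_closed hσ (Finset.singleton_subset_iff.mpr hv) (Finset.singleton_nonempty v)
  have hYX : Y.verts ⊆ X.verts := fun v hv => hv.1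
  -- key step: avoid any finite set of vertexes
  have key : ∀ F : Finset V, (F : Set V) ⊆ X.verts → ∃ v ∈ Y.verts, v ∉ F := by
    intro F hF
    obtain ⟨-, h⟩ := hX (F.card + σ.card + 1) (by omega)
    have hUsub : ((F ∪ σ : Finset V) : Set V) ⊆ X.verts := by
      intro v hv
      simp only [Finset.coe_union, Set.mem_union] at hv
      exact hv.elim (fun h => hF h) (fun h => hσV h)
    obtain ⟨v, hvV, hvU, hlink⟩ := h (F ∪ σ) hUsub
      (le_trans (Finset.card_union_le _ _) (Nat.le_succ _))
      {ρ | ρ ∈ X.faces ∧ ρ ⊆ σ}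
      (fun ρ hρ => ⟨hρ.1, (Finset.coe_subset.mpr hρ.2).trans
        (by simp [Finset.coe_union])⟩)
      (fun ρ hρ τ hτ hne => ⟨X.down_closed hρ.1 hτ hne, hτ.trans hρ.2⟩)
    have hσmem : σ ∈ X.link v ∩ X.induced ((F ∪ σ : Finset V) : Set V) := by
      rw [hlink]; exact ⟨hσ, subset_rfl⟩
    obtain ⟨⟨-, hvσ, hins⟩, -⟩ := hσmem
    refine ⟨v, ?_, fun hvF => hvU (Finset.mem_union_left _ hvF)⟩
    show ({v} : Finset V) ∈ Y.faces
    exact ⟨X.down_closed hins (by simp) (Finset.singleton_nonempty v),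
      Finset.disjoint_singleton_left.mpr hvσ,
      by rw [← Finset.insert_eq]; exact hins⟩
  refine ⟨hc.mono hYX, ?_, ?_⟩
  · -- infinite
    by_contra hfin
    rw [Set.not_infinite] at hfin
    obtain ⟨v, hvY, hvF⟩ := key hfin.toFinset
      (by rw [Set.Finite.coe_toFinset]; exact hYX)
    exact hvF (hfin.mem_toFinset.mpr hvY)
  · -- ample
    intro r hr
    constructor
    · obtain ⟨v, hvY, -⟩ := key ∅ (by simp)
      exact ⟨{v}, hvY⟩
    intro U hU hUr A hA hAdc
    have hUX : (U : Set V) ⊆ X.verts := fun v hv => hYX (hU hv)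
    obtain ⟨-, h⟩ := hX (r + σ.card) (by omega)
    have hU'sub : ((U ∪ σ : Finset V) : Set V) ⊆ X.verts := by
      intro v hv
      simp only [Finset.coe_union, Set.mem_union] at hv
      exact hv.elim (fun h => hUX h) (fun h => hσV h)
    -- the transported subcomplex
    set A' : Set (Finset V) := {ρ | ρ.Nonempty ∧ ρ ∪ σ ∈ X.faces ∧ ρ ⊆ U ∪ σ ∧
      (ρ \ σ = ∅ ∨ ρ \ σ ∈ A)} with hA'def
    have hA'sub : A' ⊆ X.induced ((U ∪ σ : Finset V) : Set V) := by
      rintro ρ ⟨hne, hρσ, hρU, -⟩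
      exact ⟨X.down_closed hρσ Finset.subset_union_left hne, Finset.coe_subset.mpr hρU⟩
    have hA'dc : DownClosed A' := by
      rintro ρ ⟨hne, hρσ, hρU, hor⟩ ρ' hρ' hne'
      refine ⟨hne', X.down_closed hρσ (Finset.union_subset_union_left hρ')
        (hne'.mono Finset.subset_union_left), hρ'.trans hρU, ?_⟩
      rcases hor with h0 | hmem
      · exact Or.inl (Finset.subset_empty.mp (h0 ▸ Finset.sdiff_subset_sdiff hρ' subset_rfl))
      · rcases Finset.eq_empty_or_nonempty (ρ' \ σ) with h0 | hne''
        · exact Or.inl h0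
        · exact Or.inr (hAdc hmem (Finset.sdiff_subset_sdiff hρ' subset_rfl) hne'')
    obtain ⟨v, hvV, hvU', hlink⟩ := h (U ∪ σ) hU'sub
      (le_trans (Finset.card_union_le _ _) (Nat.add_le_add_right hUr _)) A' hA'sub hA'dc
    have hσA' : σ ∈ A' := ⟨hσne, by rw [Finset.union_self]; exact hσ,
      Finset.subset_union_right, Or.inl (Finset.sdiff_self σ)⟩
    have hσmem : σ ∈ X.link v ∩ X.induced ((U ∪ σ : Finset V) : Set V) := by
      rw [hlink]; exact hσA'
    obtain ⟨⟨-, hvσ, hins⟩, -⟩ := hσmem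
    have hvU : v ∉ U := fun hvu => hvU' (Finset.mem_union_left _ hvu)
    have hvY : v ∈ Y.verts := ⟨X.down_closed hins (by simp) (Finset.singleton_nonempty v),
      Finset.disjoint_singleton_left.mpr hvσ,
      by rw [← Finset.insert_eq]; exact hins⟩
    refine ⟨v, hvY, hvU, ?_⟩
    ext τ
    constructor
    · rintro ⟨⟨⟨hτX, hτdisj, hτσX⟩, hvτ, ⟨-, hivdisj, hivσX⟩⟩, -, hτU⟩
      -- τ ∈ Y.link v ∩ Y.induced U ; show τ ∈ A
      have hτne : τ.Nonempty := X.nonempty_of_mem hτX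
      have hvnσ : v ∉ σ := hvσ
      have hρmem : τ ∪ σ ∈ X.link v ∩ X.induced ((U ∪ σ : Finset V) : Set V) := by
        refine ⟨⟨hτσX, ?_, ?_⟩, hτσX, ?_⟩
        · simp only [Finset.mem_union, not_or]
          exact ⟨hvτ, hvnσ⟩
        · rw [← Finset.insert_union]
          exact hivσX
        · intro x hx
          simp only [Finset.coe_union, Set.mem_union] at hx ⊢
          exact hx.elim (fun h => Or.inl (hτU h)) Or.inr
      rw [hlink] at hρmem
      obtain ⟨-, -, -, hor⟩ := hρmem
      have hcanc : (τ ∪ σ) \ σ = τ := by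
        rw [Finset.union_sdiff_right]
        exact Finset.sdiff_eq_self_of_disjoint hτdisj
      rw [hcanc] at hor
      rcases hor with h0 | hmem
      · exact absurd h0 (Finset.nonempty_iff_ne_empty.mp hτne)
      · exact hmem
    · intro hτA
      obtain ⟨⟨hτX, hτdisj, hτσX⟩, hτU⟩ := hA hτA
      have hτne : τ.Nonempty := X.nonempty_of_mem hτX
      have hρA' : τ ∪ σ ∈ A' := by
        refine ⟨hτne.mono Finset.subset_union_left, ?_, ?_, Or.inr ?_⟩
        · rw [Finset.union_assoc, Finset.union_self]; exact hτσX
        · exact Finset.union_subset_union_left (Finset.coe_subset.mp hτU)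
        · rw [Finset.union_sdiff_right, Finset.sdiff_eq_self_of_disjoint hτdisj]
          exact hτA
      rw [← hlink] at hρA'
      obtain ⟨⟨-, hvρ, hivρ⟩, -⟩ := hρA'
      have hvτ : v ∉ τ := fun hvt => hvρ (Finset.mem_union_left _ hvt)
      have hivτσ : insert v τ ∪ σ ∈ X.faces := by
        rw [Finset.insert_union]; exact hivρ
      have hivτ : insert v τ ∈ X.faces :=
        X.down_closed hivτσ Finset.subset_union_left ⟨v, Finset.mem_insert_self _ _⟩
      refine ⟨⟨⟨hτX, hτdisj, hτσX⟩, hvτ, hivτ, ?_, hivτσ⟩, ⟨hτX, hτdisj, hτσX⟩, hτU⟩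
      rw [Finset.disjoint_insert_left]
      exact ⟨hvσ, hτdisj⟩
end
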